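/- Let q be a symmetric bilinear form on a real vector space and K_1, ..., K_m vectors with q(K_i, K_j) ≥ 0 for all i ≠ j. Suppose that for every choice of nonnegative coefficients c_1,...,c_m, not all zero, there exists an index j with q(∑_i c_i K_i, K_j) < 0. Then there exist strictly positive reals d_1,...,d_m with ∑_i d_i = 1 such that q(∑_i d_i K_i, K_j) < 0 for every index j ∈ {1,...,m}. -/

import Mathlib

theorem stmt_2 {V : Type*} [AddCommGroup V] [Module ℝ V]
    (q : V →ₗ[ℝ] V →ₗ[ℝ] ℝ) (hsymm : ∀ x y, q x y = q y x)
    {m : ℕ} (hm : 0 < m) (K : Fin m → V) (hK : ∀ i j, i ≠ j → 0 ≤ q (K i) (K j))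
    (hneg : ∀ c : Fin m → ℝ, (∀ i, 0 ≤ c i) → c ≠ 0 →
      ∃ j, q (∑ i, c i • K i) (K j) < 0) :
    ∃ d : Fin m → ℝ, (∀ i, 0 < d i) ∧ (∑ i, d i) = 1 ∧
      ∀ j, q (∑ i, d i • K i) (K j) < 0 := by
  classical
  set col : Fin m → (Fin m → ℝ) := fun i j => q (K i) (K j) with hcol
  -- linear map sending weights to the vector of pairings
  let L : (Fin m → ℝ) →ₗ[ℝ] (Fin m → ℝ) :=
    { toFun := fun w => ∑ i, w i • col i
      map_add' := by
        intro a b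
        simp [add_smul, Finset.sum_add_distrib]
      map_smul' := by
        intro r a
        simp [Finset.smul_sum, mul_smul] }
  have hLapp : ∀ (w : Fin m → ℝ) (j : Fin m), L w j = q (∑ i, w i • K i) (K j) := by
    intro w j
    have : q (∑ i, w i • K i) (K j) = ∑ i, w i * q (K i) (K j) := by
      simp [map_sum, LinearMap.sum_apply]
    rw [this]
    show (∑ i, w i • col i) j = _
    simp [col]
  set P : Set (Fin m → ℝ) := L '' (stdSimplex ℝ (Fin m)) with hP
  have hPcomp : IsCompact P := (isCompact_stdSimplex ℝ (Fin m)).image L.continuous_of_finiteDimensional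
  have hPconv : Convex ℝ P := (convex_stdSimplex ℝ (Fin m)).linear_image L
  set T : Set (Fin m → ℝ) := {z | ∀ j, 0 ≤ z j} with hT
  have hTclosed : IsClosed T := by
    have : T = ⋂ j, (fun z : Fin m → ℝ => z j) ⁻¹' Set.Ici 0 := by
      ext z; simp [hT, Set.mem_iInter]
    rw [this]
    exact isClosed_iInter fun j => isClosed_Ici.preimage (continuous_apply j)
  have hTconv : Convex ℝ T := by
    intro x hx y hy a b ha hb hab
    intro j
    have : (a • x + b • y) j = a * x j + b * y j := rfl
    rw [this]
    exact add_nonneg (mul_nonneg ha (hx j)) (mul_nonneg hb (hy j))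
  have hdisj : Disjoint P T := by
    rw [Set.disjoint_left]
    rintro x ⟨w, hw, rfl⟩ hxT
    have hw0 : w ≠ 0 := by
      intro h
      have := hw.2
      rw [h] at this
      simp at this
    obtain ⟨j, hj⟩ := hneg w hw.1 hw0
    have := hxT j
    rw [hLapp w j] at this
    exact absurd hj (not_lt.mpr this)
  obtain ⟨f, u, v, hfu, huv, hfv⟩ :=
    geometric_hahn_banach_compact_closed hPconv hPcomp hTconv hTclosed hdisj
  have hv0 : v < 0 := by
    have : v < f 0 := hfv 0 (fun j => le_refl 0)
    simpa using this
  set y : Fin m → ℝ := fun j => f (Pi.single j 1) with hy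
  have hynn : ∀ j, 0 ≤ y j := by
    intro j
    by_contra h
    push_neg at h
    set t : ℝ := (v - 1) / y j with ht'
    have ht : 0 < t := div_pos_of_neg_of_neg (by linarith) h
    have hmem : t • (Pi.single j 1 : Fin m → ℝ) ∈ T := by
      intro k
      have hk0 : (t • (Pi.single j 1 : Fin m → ℝ)) k = t * (Pi.single j 1 : Fin m → ℝ) k := rfl
      rw [hk0]
      by_cases hk : k = j
      · subst hk; simp; positivity
      · simp [Pi.single_apply, hk]
    have h5 := hfv _ hmem
    rw [map_smul, smul_eq_mul] at h5
    have h6 : v < t * y j := h5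
    rw [ht', div_mul_cancel₀ _ (ne_of_lt h)] at h6
    linarith
  -- each col i is in P
  have hcolP : ∀ i, col i ∈ P := by
    intro i
    refine ⟨Pi.single i 1, single_mem_stdSimplex ℝ i, ?_⟩
    have hLdef : L (Pi.single i 1) = ∑ k, (Pi.single i 1 : Fin m → ℝ) k • col k := rfl
    rw [hLdef]
    rw [Finset.sum_eq_single i]
    · simp
    · intro b _ hb; simp [Pi.single_apply, hb]
    · simp
  -- f x = ∑ j, x j * y j
  have hfrepr : ∀ x : Fin m → ℝ, f x = ∑ j, x j * y j := by
    intro x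
    have hx : x = ∑ j, x j • (Pi.single j 1 : Fin m → ℝ) := by
      ext k
      simp [Pi.single_apply]
    conv_lhs => rw [hx]
    rw [map_sum]
    simp [hy, smul_eq_mul]
  -- main inequality: q (∑ y j • K j) (K i) < 0 for all i
  have hmain : ∀ i, q (∑ j, y j • K j) (K i) < 0 := by
    intro i
    have h1 : f (col i) < u := hfu _ (hcolP i)
    have h2 : f (col i) = ∑ j, q (K i) (K j) * y j := by
      rw [hfrepr]
    have h3 : q (∑ j, y j • K j) (K i) = ∑ j, q (K i) (K j) * y j := by
      rw [hsymm]
      simp [map_sum, LinearMap.sum_apply, mul_comm]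
    rw [h3, ← h2]
    linarith
  have hypos : ∀ i, 0 < y i := by
    intro i
    rcases lt_or_eq_of_le (hynn i) with h | h
    · exact h
    · exfalso
      have : q (∑ j, y j • K j) (K i) = ∑ j, y j * q (K j) (K i) := by
        simp [map_sum, LinearMap.sum_apply]
      have hge : 0 ≤ q (∑ j, y j • K j) (K i) := by
        rw [this]
        refine Finset.sum_nonneg fun j _ => ?_
        by_cases hj : j = i
        · subst hj; rw [← h]; simp
        · exact mul_nonneg (hynn j) (hK j i hj)
      exact absurd (hmain i) (not_lt.mpr hge)
  set s : ℝ := ∑ j, y j with hs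
  have hspos : 0 < s := by
    have : Nonempty (Fin m) := Fin.pos_iff_nonempty.mp hm
    exact Finset.sum_pos (fun j _ => hypos j) Finset.univ_nonempty
  refine ⟨fun i => y i / s, fun i => div_pos (hypos i) hspos, ?_, ?_⟩
  · rw [← Finset.sum_div, ← hs, div_self (ne_of_gt hspos)]
  · intro j
    have : (∑ i, (y i / s) • K i) = (1/s) • ∑ i, y i • K i := by
      rw [Finset.smul_sum]
      refine Finset.sum_congr rfl fun i _ => ?_
      rw [smul_smul]
      ring_nf
    rw [this]
    rw [map_smul]
    have := hmain j
    have h1s : 0 < 1/s := by positivity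
    simp only [LinearMap.smul_apply, smul_eq_mul]
    exact mul_neg_of_pos_of_neg h1s this
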